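/- Fix d ≥ 1, n ∈ ℕ, η ∈ (0, e^{−5}], and x_0 ∈ ℝ^d with |x_0| ≤ η^{−1/2}. Let (N_m)_{1≤m≤n} be vectors in ℝ^d with |N_m| < |log η|² for all 1 ≤ m ≤ n, and define Y_0 = x_0, Y_{m+1} = Y_m − η Y_m log(1+|Y_m|) + √η N_{m+1}. Then sup_{0 ≤ m ≤ n} |Y_m| ≤ η^{−1/2} |log η|². -/

import Mathlib

open Real

set_option maxHeartbeats 1000000

/-- Deterministic bound for the Euler–Maruyama recursion
`Y_{m+1} = Y_m − η Y_m log(1+|Y_m|) + √η N_{m+1}` with `η ∈ (0, e^{−5}]`,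
`|x_0| ≤ η^{−1/2}` and Gaussian increments bounded by `|log η|²`:
`sup_{0 ≤ m ≤ n} |Y_m| ≤ η^{−1/2} |log η|²`. -/
theorem em_bound_small_noise
    (d : ℕ) (hd : 1 ≤ d) (n : ℕ) (η : ℝ) (hη : 0 < η) (hη' : η ≤ Real.exp (-5))
    (x₀ : EuclideanSpace ℝ (Fin d)) (hx₀ : ‖x₀‖ ≤ η ^ (-(1 : ℝ) / 2))
    (N : ℕ → EuclideanSpace ℝ (Fin d))
    (hN : ∀ m, 1 ≤ m → m ≤ n → ‖N m‖ < |Real.log η| ^ 2)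
    (Y : ℕ → EuclideanSpace ℝ (Fin d)) (hY0 : Y 0 = x₀)
    (hYrec : ∀ m, Y (m + 1) = Y m - (η * Real.log (1 + ‖Y m‖)) • Y m + Real.sqrt η • N (m + 1)) :
    ∀ m, m ≤ n → ‖Y m‖ ≤ η ^ (-(1 : ℝ) / 2) * |Real.log η| ^ 2 := by
  -- basic facts
  have hη1 : η ≤ 1 := hη'.trans (by
    have := Real.exp_le_exp.mpr (show (-5:ℝ) ≤ 0 by norm_num)
    simpa using this)
  have hsq : 0 < Real.sqrt η := Real.sqrt_pos.mpr hη
  have hms : Real.sqrt η * Real.sqrt η = η := Real.mul_self_sqrt hη.le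
  have hlogneg : Real.log η ≤ -5 := by
    have := Real.log_le_log hη hη'
    simpa [Real.log_exp] using this
  set L : ℝ := |Real.log η| with hLdef
  have hLeq : L = - Real.log η := abs_of_nonpos (by linarith)
  have hL5 : (5:ℝ) ≤ L := by rw [hLeq]; linarith
  -- η^(-1/2) = (√η)⁻¹
  have hrpow : η ^ (-(1 : ℝ) / 2) = (Real.sqrt η)⁻¹ := by
    rw [show (-(1:ℝ)/2) = -(1/2 : ℝ) by norm_num, Real.rpow_neg hη.le, ← Real.sqrt_eq_rpow]
  -- numerics : exp 5 ≥ 36, η ≤ 1/36, √η ≤ 1/6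
  have h36 : (36:ℝ) ≤ Real.exp 5 := by
    have h1 : (2.7:ℝ) < Real.exp 1 := by
      have := Real.exp_one_gt_d9; linarith
    have h5 : (2.7:ℝ)^5 ≤ (Real.exp 1)^5 :=
      pow_le_pow_left₀ (by norm_num) h1.le 5
    have h55 : Real.exp 1 ^ (5:ℕ) = Real.exp 5 := by
      rw [Real.exp_one_pow]; norm_num
    have h56 : (36:ℝ) ≤ 2.7 ^ 5 := by norm_num
    linarith [h5, h55 ▸ h5]
  have hη36 : η ≤ 1/36 := by
    have : Real.exp (-5) = (Real.exp 5)⁻¹ := by rw [Real.exp_neg]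
    have h' : (Real.exp 5)⁻¹ ≤ 1/36 := by
      rw [one_div]
      exact inv_anti₀ (by norm_num) h36
    linarith [hη'.trans (this ▸ h')]
  have hs6 : Real.sqrt η ≤ 1/6 := by
    have := Real.sqrt_le_sqrt hη36
    have h16 : Real.sqrt (1/36 : ℝ) = 1/6 := by
      rw [show (1/36:ℝ) = (1/6)^2 by norm_num, Real.sqrt_sq (by norm_num)]
    linarith [h16 ▸ this]
  have h6 : (6:ℝ) ≤ (Real.sqrt η)⁻¹ := by
    rw [show (6:ℝ) = ((1/6:ℝ))⁻¹ by norm_num]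
    exact inv_anti₀ hsq hs6
  have hinv : Real.sqrt η * (Real.sqrt η)⁻¹ = 1 := mul_inv_cancel₀ hsq.ne'
  have hkey : η * (Real.sqrt η)⁻¹ = Real.sqrt η := by
    field_simp
    rw [Real.sq_sqrt hη.le]
  -- L ≤ 2 (√η)⁻¹, so η L ≤ 2 √η ≤ 1/3
  have hlogsqrt : Real.log (Real.sqrt η) = Real.log η / 2 := Real.log_sqrt hη.le
  have hloginv : Real.log ((Real.sqrt η)⁻¹) = L / 2 := by
    rw [Real.log_inv, hlogsqrt, hLeq]; ring
  have hL2s : L ≤ 2 * (Real.sqrt η)⁻¹ := by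
    have h1 : Real.log ((Real.sqrt η)⁻¹) ≤ (Real.sqrt η)⁻¹ - 1 :=
      Real.log_le_sub_one_of_pos (by positivity)
    rw [hloginv] at h1
    linarith
  have hηL : η * L ≤ 1/3 := by
    have h1 : η * L ≤ η * (2 * (Real.sqrt η)⁻¹) :=
      mul_le_mul_of_nonneg_left hL2s hη.le
    have h2 : η * (2 * (Real.sqrt η)⁻¹) = 2 * Real.sqrt η := by
      rw [show η * (2 * (Real.sqrt η)⁻¹) = 2 * (η * (Real.sqrt η)⁻¹) by ring, hkey]
    linarith
  have hL225 : (25:ℝ) ≤ L^2 := by nlinarith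
  -- the bound R
  set R : ℝ := (Real.sqrt η)⁻¹ * L^2 with hRdef
  have hR1 : (1:ℝ) ≤ R := by nlinarith
  -- log (1 + R) ≤ 3 L
  have hlog1R : Real.log (1 + R) ≤ 3 * L := by
    have h1 : Real.log (1 + R) ≤ Real.log (2 * R) :=
      Real.log_le_log (by linarith) (by linarith)
    have h2 : Real.log (2 * R) = Real.log 2 + Real.log ((Real.sqrt η)⁻¹) + 2 * Real.log L := by
      rw [hRdef, Real.log_mul (by norm_num) (by positivity),
        Real.log_mul (by positivity) (by positivity), Real.log_pow]
      push_cast; ring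
    have h3 : Real.log L ≤ L - 1 := Real.log_le_sub_one_of_pos (by linarith)
    have h4 : Real.log 2 ≤ 1 := by
      have := Real.log_le_sub_one_of_pos (show (0:ℝ) < 2 by norm_num); linarith
    rw [h2, hloginv] at h1
    linarith
  -- the inductive step
  have step : ∀ m, ‖Y m‖ ≤ R → ‖N (m+1)‖ < L^2 → ‖Y (m+1)‖ ≤ R := by
    intro m hYm hNm
    set c : ℝ := η * Real.log (1 + ‖Y m‖) with hcdef
    have hc0 : 0 ≤ c :=
      mul_nonneg hη.le (Real.log_nonneg (by linarith [norm_nonneg (Y m)]))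
    have hc1 : c ≤ 1 := by
      have h1 : Real.log (1 + ‖Y m‖) ≤ Real.log (1 + R) :=
        Real.log_le_log (by positivity) (by linarith)
      have h2 : c ≤ η * (3 * L) :=
        mul_le_mul_of_nonneg_left (h1.trans hlog1R) hη.le
      have h3 : η * (3 * L) = 3 * (η * L) := by ring
      linarith [hηL]
    -- norm bound for one step
    have hsplit : Y (m+1) = (1 - c) • Y m + Real.sqrt η • N (m+1) := by
      rw [hYrec m, sub_smul, one_smul]
    have hnorm : ‖Y (m+1)‖ ≤ (1 - c) * ‖Y m‖ + Real.sqrt η * ‖N (m+1)‖ := by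
      rw [hsplit]
      calc ‖(1 - c) • Y m + Real.sqrt η • N (m+1)‖
          ≤ ‖(1 - c) • Y m‖ + ‖Real.sqrt η • N (m+1)‖ := norm_add_le _ _
        _ = |1 - c| * ‖Y m‖ + |Real.sqrt η| * ‖N (m+1)‖ := by rw [norm_smul, norm_smul]; rfl
        _ = (1 - c) * ‖Y m‖ + Real.sqrt η * ‖N (m+1)‖ := by
            rw [abs_of_nonneg (by linarith), abs_of_nonneg hsq.le]
    have hnoise : Real.sqrt η * ‖N (m+1)‖ ≤ Real.sqrt η * L^2 :=
      mul_le_mul_of_nonneg_left hNm.le hsq.le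
    by_cases hcase : ‖Y m‖ ≤ (Real.sqrt η)⁻¹
    · -- small case
      have h1 : ‖Y (m+1)‖ ≤ ‖Y m‖ + Real.sqrt η * L^2 := by
        have h0 : (1 - c) * ‖Y m‖ ≤ 1 * ‖Y m‖ :=
          mul_le_mul_of_nonneg_right (by linarith) (norm_nonneg _)
        rw [one_mul] at h0
        linarith
      have h2 : (Real.sqrt η)⁻¹ + Real.sqrt η * L^2 ≤ R := by
        rw [hRdef]
        have hA : Real.sqrt η * L^2 ≤ 1/6 * L^2 :=
          mul_le_mul_of_nonneg_right hs6 (sq_nonneg L)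
        have hB : 6 * (L^2 - 1) ≤ (Real.sqrt η)⁻¹ * (L^2 - 1) :=
          mul_le_mul_of_nonneg_right h6 (by linarith [hL225])
        have hC : (Real.sqrt η)⁻¹ * (L^2 - 1)
            = (Real.sqrt η)⁻¹ * L^2 - (Real.sqrt η)⁻¹ := by ring
        linarith [hL225]
      linarith
    · -- large case: contraction
      push_neg at hcase
      have hlow : η * (L/2) ≤ c := by
        have h1 : Real.log ((Real.sqrt η)⁻¹) ≤ Real.log (1 + ‖Y m‖) :=
          Real.log_le_log (by positivity) (by linarith)
        rw [hloginv] at h1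
        have := mul_le_mul_of_nonneg_left h1 hη.le
        linarith
      have hcoef : 0 ≤ 1 - η * (L/2) := by linarith [hηL]
      have h1 : (1 - c) * ‖Y m‖ ≤ (1 - η * (L/2)) * ‖Y m‖ :=
        mul_le_mul_of_nonneg_right (by linarith) (norm_nonneg _)
      have h2 : (1 - η * (L/2)) * ‖Y m‖ ≤ (1 - η * (L/2)) * R :=
        mul_le_mul_of_nonneg_left hYm hcoef
      have h3 : (1 - η * (L/2)) * R + Real.sqrt η * L^2 ≤ R := by
        have hexp : η * (L/2) * R = Real.sqrt η * (L^3 / 2) := by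
          rw [hRdef]
          calc η * (L/2) * ((Real.sqrt η)⁻¹ * L^2)
              = (η * (Real.sqrt η)⁻¹) * (L/2 * L^2) := by ring
            _ = Real.sqrt η * (L^3/2) := by rw [hkey]; ring
        have h4 : Real.sqrt η * L^2 ≤ Real.sqrt η * (L^3/2) :=
          mul_le_mul_of_nonneg_left
            (by nlinarith [mul_nonneg (sq_nonneg L) (show (0:ℝ) ≤ L/2 - 1 by linarith)]) hsq.le
        linarith [hexp, h4]
      linarith
  -- induction
  intro m hm
  rw [hrpow, ← hRdef]
  induction m with
  | zero =>
      rw [hY0]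
      have : (Real.sqrt η)⁻¹ ≤ R := by rw [hRdef]; nlinarith [inv_pos.mpr hsq]
      calc ‖x₀‖ ≤ η ^ (-(1:ℝ)/2) := hx₀
        _ = (Real.sqrt η)⁻¹ := hrpow
        _ ≤ R := this
  | succ k ih =>
      have hk : k ≤ n := Nat.le_of_succ_le hm
      exact step k (ih hk) (hN (k+1) (Nat.succ_le_succ (Nat.zero_le k)) hm)
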